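/- Let S be a finite subset of ℤ^n contained in a lattice polytope P, and assume S is not contained in an affine hyperplane. Then there exists a vector v ∈ ℤ^n and a simplex Δ ⊆ S (an affinely independent subset of cardinality n+1) such that the linear form x ↦ ⟨x, v⟩ averaged over Δ is strictly greater than its average over every other simplex T ⊆ S, T ≠ Δ. -/

import Mathlib

def castQ {n : ℕ} (p : Fin n → ℤ) : Fin n → ℚ := fun i => (p i : ℚ)

/-- A simplex in `ℤ^n`: `n+1` points not contained in an affine hyperplane. -/
def IsSimplex {n : ℕ} (Δ : Finset (Fin n → ℤ)) : Prop :=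
  Δ.card = n + 1 ∧
    AffineIndependent ℚ (fun p : {x // x ∈ Δ} => castQ (p : Fin n → ℤ))

open Module

def liftQ {n : ℕ} (p : Fin n → ℤ) : Fin (n+1) → ℚ := Fin.cons 1 (castQ p)

lemma castQ_inj {n : ℕ} : Function.Injective (castQ (n := n)) := by
  intro p q h
  funext i
  have := congrFun h i
  simpa [castQ] using this

lemma liftQ_inj {n : ℕ} : Function.Injective (liftQ (n := n)) := by
  intro p q h
  apply castQ_inj
  funext i
  have := congrFun h i.succ
  simpa [liftQ] using this

section Main

variable {n : ℕ}

lemma sum_smul_liftQ_eq_zero_iff {ι : Type*} (s : Finset ι) (w : ι → ℚ)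
    (p : ι → (Fin n → ℤ)) :
    ∑ e ∈ s, w e • liftQ (p e) = 0 ↔
      (∑ e ∈ s, w e = 0 ∧ ∑ e ∈ s, w e • castQ (p e) = 0) := by
  constructor
  · intro h
    constructor
    · have := congrFun h 0
      simpa [liftQ, Finset.sum_apply] using this
    · funext i
      have := congrFun h i.succ
      simpa [liftQ, Finset.sum_apply] using this
  · rintro ⟨h0, h1⟩
    funext j
    induction j using Fin.cases with
    | zero => simpa [liftQ, Finset.sum_apply] using h0
    | succ i =>
      have := congrFun h1 i
      simpa [liftQ, Finset.sum_apply] using this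

lemma affine_iff_lift_linear {ι : Type*} (p : ι → (Fin n → ℤ)) :
    AffineIndependent ℚ (fun i => castQ (p i)) ↔
      LinearIndependent ℚ (fun i => liftQ (p i)) := by
  rw [affineIndependent_iff, linearIndependent_iff']
  constructor
  · intro h s w hsum
    rw [sum_smul_liftQ_eq_zero_iff] at hsum
    exact h s w hsum.1 hsum.2
  · intro h s w h0 h1
    exact h s w ((sum_smul_liftQ_eq_zero_iff s w p).2 ⟨h0, h1⟩)

/-- lifted independence on a finset image vs affine independence. -/
lemma lift_image_indep_iff (Δ : Finset (Fin n → ℤ)) :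
    LinearIndependent ℚ ((↑) : {x // x ∈ Δ.image liftQ} → (Fin (n+1) → ℚ)) ↔
      AffineIndependent ℚ (fun p : {x // x ∈ Δ} => castQ (p : Fin n → ℤ)) := by
  classical
  rw [affine_iff_lift_linear (fun p : {x // x ∈ Δ} => (p : Fin n → ℤ))]
  have hbij : Function.Bijective
      (fun p : {x // x ∈ Δ} =>
        (⟨liftQ p, Finset.mem_image_of_mem _ p.2⟩ : {x // x ∈ Δ.image liftQ})) := by
    constructor
    · intro a b hab
      apply Subtype.ext
      apply liftQ_inj
      exact congrArg Subtype.val hab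
    · rintro ⟨u, hu⟩
      obtain ⟨p, hp, rfl⟩ := Finset.mem_image.1 hu
      exact ⟨⟨p, hp⟩, rfl⟩
  let e := Equiv.ofBijective _ hbij
  rw [← linearIndependent_equiv e]
  rfl

end Main


lemma exists_sep {n : ℕ} (D : Finset (Fin n → ℤ)) :
    ∃ v : Fin n → ℤ, ∀ d ∈ D, d ≠ 0 → (∑ i, d i * v i) ≠ 0 := by
  classical
  induction D using Finset.induction_on with
  | empty => exact ⟨0, by simp⟩
  | @insert d D' hdD' ih =>
    obtain ⟨v, hv⟩ := ih
    by_cases hd : d = 0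
    · refine ⟨v, ?_⟩
      intro e he hne
      rcases Finset.mem_insert.1 he with rfl | he'
      · exact absurd hd hne
      · exact hv e he' hne
    · obtain ⟨j, hj⟩ : ∃ j, d j ≠ 0 := by
        by_contra h
        push_neg at h
        exact hd (funext h)
      set B : Finset ℚ :=
        (insert d D').image (fun e => -((∑ i, e i * v i : ℤ) : ℚ) / (e j : ℚ)) with hB
      obtain ⟨t, ht⟩ : ∃ t : ℤ, ∀ b ∈ B, b < (t : ℚ) := by
        rcases B.eq_empty_or_nonempty with h | h
        · exact ⟨0, by simp [h]⟩
        · obtain ⟨t, ht⟩ := exists_int_gt (B.max' h)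
          exact ⟨t, fun b hb => lt_of_le_of_lt (B.le_max' b hb) ht⟩
      set v' : Fin n → ℤ := Function.update v j (v j + t) with hv'
      have key : ∀ e : Fin n → ℤ, (∑ i, e i * v' i) = (∑ i, e i * v i) + e j * t := by
        intro e
        have : ∀ i, e i * v' i = e i * v i + (if i = j then e i * t else 0) := by
          intro i
          by_cases h : i = j
          · subst h; simp [hv', Function.update_self]; ring
          · simp [hv', Function.update_of_ne h, h]
        simp only [this, Finset.sum_add_distrib]
        congr 1
        simp [Finset.sum_ite_eq']
      refine ⟨v', ?_⟩
      intro e he hne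
      rw [key]
      by_cases hej : e j = 0
      · have he' : e ∈ D' := by
          rcases Finset.mem_insert.1 he with rfl | h
          · exact absurd hej hj
          · exact h
        simpa [hej] using hv e he' hne
      · intro hcontra
        have hq : ((∑ i, e i * v i : ℤ) : ℚ) + (e j : ℚ) * (t : ℚ) = 0 := by
          exact_mod_cast congrArg (fun z : ℤ => (z : ℚ)) hcontra
        have hmem : -((∑ i, e i * v i : ℤ) : ℚ) / (e j : ℚ) ∈ B :=
          Finset.mem_image_of_mem _ he
        have hejQ : (e j : ℚ) ≠ 0 := Int.cast_ne_zero.2 hej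
        have : -((∑ i, e i * v i : ℤ) : ℚ) / (e j : ℚ) = (t : ℚ) := by
          field_simp
          push_cast at hq ⊢
          linarith
        have := ht _ hmem
        rw [‹-((∑ i, e i * v i : ℤ) : ℚ) / (e j : ℚ) = (t : ℚ)›] at this
        exact lt_irrefl _ this


section Core
variable {V : Type*} [AddCommGroup V] [DecidableEq V] [Module ℚ V] [FiniteDimensional ℚ V]

lemma exchange_lemma (B B' : Finset V)
    (hB : LinearIndependent ℚ ((↑) : {x // x ∈ B} → V))
    (hB' : LinearIndependent ℚ ((↑) : {x // x ∈ B'} → V))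
    (hB'c : B'.card = finrank ℚ V)
    {e : V} (heB : e ∈ B) (heB' : e ∉ B') :
    ∃ f ∈ B', f ∉ B ∧
      LinearIndependent ℚ ((↑) : {x // x ∈ insert e (B'.erase f)} → V) ∧
      (insert e (B'.erase f)).card = finrank ℚ V := by
  classical
  have hfrpos : 0 < finrank ℚ V := by
    rcases Nat.eq_zero_or_pos (finrank ℚ V) with h | h
    · exfalso
      have he0 : e ≠ 0 := hB.ne_zero ⟨e, heB⟩
      have : Subsingleton V := finrank_zero_iff.1 h
      exact he0 (Subsingleton.elim _ _)
    · exact h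
  haveI : Nonempty {x // x ∈ B'} := by
    obtain ⟨x, hx⟩ := Finset.card_pos.1 (hB'c ▸ hfrpos)
    exact ⟨⟨x, hx⟩⟩
  set b : Basis {x // x ∈ B'} ℚ V :=
    basisOfLinearIndependentOfCardEqFinrank hB' (by simpa using hB'c) with hb
  have hbcoe : ⇑b = ((↑) : {x // x ∈ B'} → V) :=
    coe_basisOfLinearIndependentOfCardEqFinrank _ _
  have hspanB' : Submodule.span ℚ (B' : Set V) = ⊤ := by
    have := b.span_eq
    rwa [hbcoe, Subtype.range_coe] at this
  -- find f ∈ B' \ B with (b.repr e) f ≠ 0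
  have hf : ∃ f : {x // x ∈ B'}, (f : V) ∉ B ∧ b.repr e f ≠ 0 := by
    by_contra h
    push_neg at h
    -- then e ∈ span (B ∩ B') ⊆ span (B \ {e})
    have hmem : e ∈ Submodule.span ℚ ((B : Set V) \ {e}) := by
      have : e = ∑ f : {x // x ∈ B'}, b.repr e f • (f : V) := by
        conv_lhs => rw [← b.sum_repr e]
        simp [hbcoe]
      nth_rewrite 2 [this]
      apply Submodule.sum_mem
      intro f _
      by_cases hrf : b.repr e f = 0
      · simp [hrf]
      · apply Submodule.smul_mem
        apply Submodule.subset_span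
        have hfB : (f : V) ∈ B := by
          by_contra hc
          exact hrf (h f hc)
        refine ⟨hfB, ?_⟩
        simp only [Set.mem_singleton_iff]
        intro hfe
        exact heB' (hfe ▸ f.2)
    -- contradiction with independence of B
    have := hB.notMem_span_image (s := {y : {x // x ∈ B} | (y : V) ≠ e})
      (x := ⟨e, heB⟩) (by simp)
    apply this
    have himg : ((↑) : {x // x ∈ B} → V) '' {y | (y : V) ≠ e} = (B : Set V) \ {e} := by
      ext x
      constructor
      · rintro ⟨y, hy, rfl⟩
        exact ⟨y.2, hy⟩
      · rintro ⟨hx, hxe⟩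
        exact ⟨⟨x, hx⟩, hxe, rfl⟩
    rw [himg]
    exact hmem
  obtain ⟨f, hfB, hfrepr⟩ := hf
  have hfB' : (f : V) ∈ B' := f.2
  -- e ∉ span (B' \ {f})
  have hespan : e ∉ Submodule.span ℚ ((B'.erase (f : V)) : Set V) := by
    intro hmem
    apply hfrepr
    have hle : Submodule.span ℚ ((B'.erase (f : V)) : Set V) ≤
        LinearMap.ker (b.coord f) := by
      rw [Submodule.span_le]
      intro x hx
      rw [Finset.coe_erase] at hx
      obtain ⟨hxB', hxf⟩ := hx
      have : x = b ⟨x, hxB'⟩ := by rw [hbcoe]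
      rw [SetLike.mem_coe, LinearMap.mem_ker, this, Basis.coord_apply, Basis.repr_self,
        Finsupp.single_apply]
      have : (⟨x, hxB'⟩ : {x // x ∈ B'}) ≠ f := by
        intro hc
        apply hxf
        simp [← hc]
      simp [Subtype.ext_iff] at this ⊢
      intro hc
      exact absurd hc this
    have := hle hmem
    rw [LinearMap.mem_ker] at this
    rwa [Basis.coord_apply] at this
  -- exchange
  have hfspan : (f : V) ∈ Submodule.span ℚ (insert e ((B'.erase (f : V)) : Set V)) := by
    apply mem_span_insert_exchange (K := ℚ) ?_ hespan
    have h1 : insert (f : V) ((B'.erase (f : V)) : Set V) = (B' : Set V) := by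
      rw [Finset.coe_erase, Set.insert_diff_singleton, Set.insert_eq_self]
      exact hfB'
    rw [h1, hspanB']
    exact Submodule.mem_top
  have henotin : e ∉ B'.erase (f : V) := fun h => heB' (Finset.mem_of_mem_erase h)
  have hcard : (insert e (B'.erase (f : V))).card = finrank ℚ V := by
    rw [Finset.card_insert_of_notMem henotin, Finset.card_erase_of_mem hfB']
    have : 1 ≤ B'.card := Finset.card_pos.2 ⟨f, hfB'⟩
    omega
  have hspan'' : ⊤ ≤ Submodule.span ℚ ((insert e (B'.erase (f : V)) : Finset V) : Set V) := by
    rw [← hspanB', Submodule.span_le]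
    intro x hx
    rw [SetLike.mem_coe]
    rcases eq_or_ne x (f : V) with rfl | hxf
    · simpa [Finset.coe_insert] using hfspan
    · apply Submodule.subset_span
      simp only [Finset.coe_insert, Set.mem_insert_iff, Finset.mem_coe, Finset.mem_erase]
      right
      exact ⟨hxf, hx⟩
  have hindep : LinearIndependent ℚ ((↑) : {x // x ∈ insert e (B'.erase (f : V))} → V) := by
    apply linearIndependent_of_top_le_span_of_card_eq_finrank
    · rwa [Subtype.range_coe]
    · simpa using hcard
  exact ⟨f, hfB', hfB, hindep, hcard⟩

end Core

section Core2
variable {V : Type*} [AddCommGroup V] [DecidableEq V] [Module ℚ V] [FiniteDimensional ℚ V]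

lemma improve (S' : Finset V) (W : V → ℚ) (hW : Set.InjOn W (S' : Set V))
    (A C : Finset V) (hAS : A ⊆ S') (hCS : C ⊆ S')
    (hA : LinearIndependent ℚ ((↑) : {x // x ∈ A} → V))
    (hC : LinearIndependent ℚ ((↑) : {x // x ∈ C} → V))
    (hCc : C.card = Module.finrank ℚ V)
    {e : V} (heA : e ∈ A) (heC : e ∉ C)
    (hmax : ∀ x ∈ A ∪ C, x ∉ A ∩ C → W x ≤ W e) :
    ∃ C'', C'' ⊆ S' ∧ C''.card = Module.finrank ℚ V ∧
      LinearIndependent ℚ ((↑) : {x // x ∈ C''} → V) ∧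
      ∑ x ∈ C, W x < ∑ x ∈ C'', W x := by
  classical
  obtain ⟨f, hfC, hfA, hind, hcard⟩ := exchange_lemma A C hA hC hCc heA heC
  refine ⟨insert e (C.erase f), ?_, hcard, hind, ?_⟩
  · intro x hx
    rcases Finset.mem_insert.1 hx with rfl | hx'
    · exact hAS heA
    · exact hCS (Finset.mem_of_mem_erase hx')
  · have hfe : f ≠ e := fun h => hfA (h ▸ heA)
    have hWfe : W f < W e := by
      have hle : W f ≤ W e := hmax f (Finset.mem_union_right _ hfC)
        (fun h => hfA (Finset.mem_inter.1 h).1)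
      rcases lt_or_eq_of_le hle with h | h
      · exact h
      · exact absurd (hW (hCS hfC) (hAS heA) h) hfe
    have henotin : e ∉ C.erase f := fun h => heC (Finset.mem_of_mem_erase h)
    rw [Finset.sum_insert henotin, Finset.sum_erase_eq_sub hfC]
    linarith

theorem core_unique (S' : Finset V) (W : V → ℚ) (hW : Set.InjOn W (S' : Set V))
    (hex : ∃ B, B ⊆ S' ∧ B.card = Module.finrank ℚ V ∧
      LinearIndependent ℚ ((↑) : {x // x ∈ B} → V)) :
    ∃ Δ, Δ ⊆ S' ∧ Δ.card = Module.finrank ℚ V ∧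
      LinearIndependent ℚ ((↑) : {x // x ∈ Δ} → V) ∧
      ∀ T, T ⊆ S' → T.card = Module.finrank ℚ V →
        LinearIndependent ℚ ((↑) : {x // x ∈ T} → V) → T ≠ Δ →
        ∑ x ∈ T, W x < ∑ x ∈ Δ, W x := by
  classical
  set cand : Finset (Finset V) := S'.powerset.filter
    (fun B => B.card = Module.finrank ℚ V ∧
      LinearIndependent ℚ ((↑) : {x // x ∈ B} → V)) with hcand
  have hmem_cand : ∀ B, B ∈ cand ↔ B ⊆ S' ∧ B.card = Module.finrank ℚ V ∧
      LinearIndependent ℚ ((↑) : {x // x ∈ B} → V) := by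
    intro B
    simp [hcand, Finset.mem_filter, Finset.mem_powerset, and_assoc]
  have hne : cand.Nonempty := by
    obtain ⟨B, h1, h2, h3⟩ := hex
    exact ⟨B, (hmem_cand B).2 ⟨h1, h2, h3⟩⟩
  obtain ⟨Δ, hΔcand, hΔmax⟩ := cand.exists_max_image (fun B => ∑ x ∈ B, W x) hne
  obtain ⟨hΔS, hΔc, hΔi⟩ := (hmem_cand Δ).1 hΔcand
  refine ⟨Δ, hΔS, hΔc, hΔi, ?_⟩
  intro T hTS hTc hTi hTne
  have hle : ∑ x ∈ T, W x ≤ ∑ x ∈ Δ, W x :=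
    hΔmax T ((hmem_cand T).2 ⟨hTS, hTc, hTi⟩)
  rcases lt_or_eq_of_le hle with h | heq
  · exact h
  exfalso
  -- symmetric difference
  set sd : Finset V := (T ∪ Δ) \ (T ∩ Δ) with hsd
  have hsdne : sd.Nonempty := by
    rw [Finset.sdiff_nonempty]
    intro hsub
    apply hTne
    apply Finset.Subset.antisymm
    · intro x hx
      exact (Finset.mem_inter.1 (hsub (Finset.mem_union_left _ hx))).2
    · intro x hx
      exact (Finset.mem_inter.1 (hsub (Finset.mem_union_right _ hx))).1
  obtain ⟨e, hesd, hemax⟩ := sd.exists_max_image W hsdne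
  have hesd' := Finset.mem_sdiff.1 hesd
  obtain ⟨heU, heI⟩ := hesd'
  have hcases : (e ∈ T ∧ e ∉ Δ) ∨ (e ∈ Δ ∧ e ∉ T) := by
    rcases Finset.mem_union.1 heU with h1 | h1
    · left
      exact ⟨h1, fun h2 => heI (Finset.mem_inter.2 ⟨h1, h2⟩)⟩
    · by_cases h2 : e ∈ T
      · exact absurd (Finset.mem_inter.2 ⟨h2, h1⟩) heI
      · right; exact ⟨h1, h2⟩
  have hmax' : ∀ (A C : Finset V), A = T ∧ C = Δ ∨ A = Δ ∧ C = T →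
      ∀ x ∈ A ∪ C, x ∉ A ∩ C → W x ≤ W e := by
    rintro A C (⟨rfl, rfl⟩ | ⟨rfl, rfl⟩) x hx1 hx2
    · exact hemax x (Finset.mem_sdiff.2 ⟨hx1, hx2⟩)
    · apply hemax x
      rw [hsd]
      simp only [Finset.mem_sdiff, Finset.mem_union, Finset.mem_inter] at hx1 hx2 ⊢
      tauto
  rcases hcases with ⟨heT, heΔ⟩ | ⟨heΔ, heT⟩
  · obtain ⟨C'', hC1, hC2, hC3, hC4⟩ := improve S' W hW T Δ hTS hΔS hTi hΔi hΔc heT heΔ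
      (hmax' T Δ (Or.inl ⟨rfl, rfl⟩))
    have := hΔmax C'' ((hmem_cand C'').2 ⟨hC1, hC2, hC3⟩)
    linarith
  · obtain ⟨C'', hC1, hC2, hC3, hC4⟩ := improve S' W hW Δ T hΔS hTS hΔi hTi hTc heΔ heT
      (hmax' Δ T (Or.inr ⟨rfl, rfl⟩))
    have := hΔmax C'' ((hmem_cand C'').2 ⟨hC1, hC2, hC3⟩)
    linarith

end Core2


/-- If a finite set `S` of lattice points is not contained in an affine hyperplane
(its affine span is everything), then there is a vector `v ∈ ℤ^n` and a simplex
`Δ ⊆ S` such that the average of `⟨·,v⟩` over `Δ` is strictly greater than its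
average over every other simplex `T ⊆ S`. -/
theorem stmt_2 (n : ℕ) (S : Finset (Fin n → ℤ))
    (hspan : affineSpan ℚ (castQ '' (S : Set (Fin n → ℤ))) = ⊤) :
    ∃ (v : Fin n → ℤ) (Δ : Finset (Fin n → ℤ)), Δ ⊆ S ∧ IsSimplex Δ ∧
      ∀ T : Finset (Fin n → ℤ), T ⊆ S → IsSimplex T → T ≠ Δ →
        ((n : ℚ) + 1)⁻¹ * ∑ p ∈ T, ((∑ i, p i * v i : ℤ) : ℚ) <
          ((n : ℚ) + 1)⁻¹ * ∑ p ∈ Δ, ((∑ i, p i * v i : ℤ) : ℚ) := by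
  classical
  -- separating weights
  set D : Finset (Fin n → ℤ) := (S ×ˢ S).image (fun x => x.1 - x.2) with hD
  obtain ⟨v, hv⟩ := exists_sep D
  have hWinj : ∀ p ∈ S, ∀ q ∈ S, p ≠ q → (∑ i, p i * v i) ≠ (∑ i, q i * v i) := by
    intro p hp q hq hne heq
    have hd : p - q ∈ D := Finset.mem_image.2 ⟨(p, q), Finset.mem_product.2 ⟨hp, hq⟩, rfl⟩
    have hzero : (∑ i, (p - q) i * v i) = 0 := by
      simp only [Pi.sub_apply, sub_mul, Finset.sum_sub_distrib, heq, sub_self]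
    exact hv _ hd (sub_ne_zero.2 hne) hzero
  set W : (Fin (n+1) → ℚ) → ℚ := fun u => ∑ i : Fin n, u i.succ * (v i : ℚ) with hW
  have hWlift : ∀ p : Fin n → ℤ, W (liftQ p) = ((∑ i, p i * v i : ℤ) : ℚ) := by
    intro p
    have : W (liftQ p) = ∑ i : Fin n, (p i : ℚ) * (v i : ℚ) := by
      simp [hW, liftQ, castQ]
    rw [this]
    push_cast
    rfl
  have hWinj' : Set.InjOn W ((S.image liftQ : Finset (Fin (n+1) → ℚ)) : Set (Fin (n+1) → ℚ)) := by
    intro u1 h1 u2 h2 heq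
    simp only [Finset.coe_image, Set.mem_image, Finset.mem_coe] at h1 h2
    obtain ⟨p, hp, rfl⟩ := h1
    obtain ⟨q, hq, rfl⟩ := h2
    by_cases hpq : p = q
    · rw [hpq]
    · exfalso
      apply hWinj p hp q hq hpq
      have := heq
      rw [hWlift, hWlift] at this
      exact_mod_cast this
  -- existence of an initial simplex
  obtain ⟨t, hts, htop, hti⟩ := exists_affineIndependent ℚ (Fin n → ℚ) (castQ '' (S : Set (Fin n → ℤ)))
  rw [hspan] at htop
  have htfin : t.Finite := (S.finite_toSet.image castQ).subset hts
  haveI := htfin.fintype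
  have hcardt : Fintype.card t = n + 1 := by
    have h1 := (hti.affineSpan_eq_top_iff_card_eq_finrank_add_one).1
      (by rw [Subtype.range_coe]; exact htop)
    rw [h1, Module.finrank_fin_fun]
  set Δ₀ : Finset (Fin n → ℤ) := S.filter (fun p => castQ p ∈ t) with hΔ₀
  have hΔ₀S : Δ₀ ⊆ S := Finset.filter_subset _ _
  have himg : castQ '' (Δ₀ : Set (Fin n → ℤ)) = t := by
    ext x
    constructor
    · rintro ⟨p, hp, rfl⟩
      exact (Finset.mem_filter.1 hp).2
    · intro hx
      obtain ⟨p, hp, rfl⟩ := hts hx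
      exact ⟨p, Finset.mem_filter.2 ⟨hp, hx⟩, rfl⟩
  have hΔ₀img : (Δ₀.image castQ : Set (Fin n → ℚ)) = t := by
    rw [Finset.coe_image]; exact himg
  have hΔ₀card : Δ₀.card = n + 1 := by
    rw [← Finset.card_image_of_injective Δ₀ castQ_inj]
    rw [← hcardt, ← Set.toFinset_card]
    congr 1
    apply Finset.coe_injective
    rw [hΔ₀img, Set.coe_toFinset]
  have hΔ₀ai : AffineIndependent ℚ (fun p : {x // x ∈ Δ₀} => castQ (p : Fin n → ℤ)) := by
    have hg : Function.Injective (fun p : {x // x ∈ Δ₀} =>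
        (⟨castQ p, by rw [← himg]; exact Set.mem_image_of_mem _ (Finset.mem_coe.2 p.2)⟩ : t)) := by
      intro a b hab
      apply Subtype.ext
      apply castQ_inj
      exact congrArg Subtype.val hab
    exact hti.comp_embedding ⟨_, hg⟩
  have hΔ₀simplex : IsSimplex Δ₀ := ⟨hΔ₀card, hΔ₀ai⟩
  have hfr : Module.finrank ℚ (Fin (n+1) → ℚ) = n + 1 := Module.finrank_fin_fun ℚ
  obtain ⟨Δ', hΔ'S, hΔ'c, hΔ'i, hΔ'max⟩ := core_unique (S.image liftQ) W hWinj'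
    ⟨Δ₀.image liftQ, Finset.image_subset_image hΔ₀S,
      by rw [Finset.card_image_of_injective _ liftQ_inj, hfr]; exact hΔ₀card,
      (lift_image_indep_iff Δ₀).2 hΔ₀ai⟩
  set Δ : Finset (Fin n → ℤ) := S.filter (fun p => liftQ p ∈ Δ') with hΔdef
  have hΔS : Δ ⊆ S := Finset.filter_subset _ _
  have hΔimg : Δ.image liftQ = Δ' := by
    apply Finset.Subset.antisymm
    · intro u hu
      obtain ⟨p, hp, rfl⟩ := Finset.mem_image.1 hu
      exact (Finset.mem_filter.1 hp).2
    · intro u hu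
      obtain ⟨p, hp, rfl⟩ := Finset.mem_image.1 (hΔ'S hu)
      exact Finset.mem_image_of_mem _ (Finset.mem_filter.2 ⟨hp, hu⟩)
  have hΔcard : Δ.card = n + 1 := by
    rw [← Finset.card_image_of_injective Δ liftQ_inj, hΔimg, hΔ'c, hfr]
  have hΔsimplex : IsSimplex Δ :=
    ⟨hΔcard, (lift_image_indep_iff Δ).1 (by rw [hΔimg]; exact hΔ'i)⟩
  refine ⟨v, Δ, hΔS, hΔsimplex, ?_⟩
  intro T hTS hTsim hTne
  have hT' := hΔ'max (T.image liftQ) (Finset.image_subset_image hTS)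
    (by rw [Finset.card_image_of_injective _ liftQ_inj, hfr]; exact hTsim.1)
    ((lift_image_indep_iff T).2 hTsim.2)
    (by
      intro h
      apply hTne
      apply Finset.image_injective liftQ_inj
      rw [h, hΔimg])
  have hsum : ∀ (U : Finset (Fin n → ℤ)),
      ∑ u ∈ U.image liftQ, W u = ∑ p ∈ U, ((∑ i, p i * v i : ℤ) : ℚ) := by
    intro U
    rw [Finset.sum_image (fun x _ y _ h => liftQ_inj h)]
    exact Finset.sum_congr rfl (fun p _ => hWlift p)
  rw [← hΔimg, hsum, hsum] at hT'
  have hpos : (0:ℚ) < ((n:ℚ)+1)⁻¹ := by positivity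
  exact mul_lt_mul_of_pos_left hT' hpos
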